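/- Every fan in a two-dimensional ℚ-vector space is quasi-projective. In particular, every fan in ℚ² is quasi-projective. -/

import Mathlib

open Pointwise

/-- The cone generated by a finite family of vectors: all nonnegative
rational linear combinations of the `g i`. -/
def coneGen {V : Type*} [AddCommGroup V] [Module ℚ V] {n : ℕ} (g : Fin n → V) : Set V :=
  {x | ∃ c : Fin n → ℚ, (∀ i, 0 ≤ c i) ∧ x = ∑ i, c i • g i}

/-- A set is a cone if it is the cone generated by some finite family of vectors. -/
def IsCone {V : Type*} [AddCommGroup V] [Module ℚ V] (C : Set V) : Prop :=
  ∃ (n : ℕ) (g : Fin n → V), C = coneGen g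

/-- `F` is a face of the cone `C` if `F = C ∩ l⁻¹(0)` for some linear form `l`
nonnegative on `C`. -/
def IsFaceOf {V : Type*} [AddCommGroup V] [Module ℚ V] (F C : Set V) : Prop :=
  ∃ l : V →ₗ[ℚ] ℚ, (∀ x ∈ C, 0 ≤ l x) ∧ F = C ∩ {x | l x = 0}

/-- A fan: a finite collection of strictly convex cones, closed under taking faces,
such that the intersection of any two of its cones is a face of each. -/
def IsFan {V : Type*} [AddCommGroup V] [Module ℚ V] (S : Set (Set V)) : Prop :=
  S.Finite ∧
  (∀ C ∈ S, IsCone C ∧ C ∩ (-C) = ({0} : Set V)) ∧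
  (∀ C ∈ S, ∀ F : Set V, IsFaceOf F C → F ∈ S) ∧
  (∀ C ∈ S, ∀ C' ∈ S, IsFaceOf (C ∩ C') C ∧ IsFaceOf (C ∩ C') C')

/-- A cone of the collection `S` is maximal if it is not strictly contained in
another cone of `S`. -/
def IsMaximalIn {V : Type*} [AddCommGroup V] [Module ℚ V] (S : Set (Set V)) (C : Set V) : Prop :=
  C ∈ S ∧ ∀ C' ∈ S, C ⊆ C' → C' = C

/-- A fan is quasi-projective if there is a family of linear forms indexed by its
maximal cones which agree on pairwise intersections and satisfy the strict
inequality condition. -/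
def IsQuasiProjectiveFan {V : Type*} [AddCommGroup V] [Module ℚ V] (S : Set (Set V)) : Prop :=
  ∃ l : Set V → (V →ₗ[ℚ] ℚ),
    (∀ C, IsMaximalIn S C → ∀ C', IsMaximalIn S C' → ∀ x ∈ C ∩ C', l C x = l C' x) ∧
    (∀ C, IsMaximalIn S C → ∀ C', IsMaximalIn S C' → C ≠ C' →
      ∀ x ∈ C, x ∉ C' → l C' x < l C x)

set_option maxHeartbeats 1000000
set_option linter.unusedSectionVars false

noncomputable section
namespace QP

def Nq (a b : ℚ) : ℚ := |a| + |b| + a ^ 2 / (|a| + |b|)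

lemma nq_nonneg (a b : ℚ) : 0 ≤ Nq a b := by
  unfold Nq; positivity

lemma nq_zero : Nq 0 0 = 0 := by simp [Nq]

lemma abs_sum_pos {a b : ℚ} (h : ¬(a = 0 ∧ b = 0)) : 0 < |a| + |b| := by
  rcases not_and_or.mp h with h | h
  · have := abs_pos.mpr h; have := abs_nonneg b; linarith
  · have := abs_pos.mpr h; have := abs_nonneg a; linarith

lemma nq_pos {a b : ℚ} (h : ¬(a = 0 ∧ b = 0)) : 0 < Nq a b := by
  have hp := abs_sum_pos h
  have h2 : 0 ≤ a ^ 2 / (|a| + |b|) := by positivity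
  unfold Nq; linarith

lemma nq_smul {t : ℚ} (ht : 0 ≤ t) (a b : ℚ) : Nq (t * a) (t * b) = t * Nq a b := by
  unfold Nq
  rw [abs_mul, abs_mul, abs_of_nonneg ht]
  rcases eq_or_lt_of_le ht with h | h
  · rw [← h]; simp
  · by_cases hp : |a| + |b| = 0
    · have ha : a = 0 := abs_eq_zero.mp (by nlinarith [abs_nonneg a, abs_nonneg b])
      have hb : b = 0 := abs_eq_zero.mp (by nlinarith [abs_nonneg a, abs_nonneg b])
      subst ha; subst hb; simp
    · have e1 : t * |a| + t * |b| = t * (|a| + |b|) := by ring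
      have e2 : (t * a) ^ 2 = t * (t * a ^ 2) := by ring
      rw [e1, e2, mul_div_mul_left _ _ (ne_of_gt h), mul_div_assoc]
      ring

lemma nq_subadd (a b c d : ℚ) : Nq (a + c) (b + d) ≤ Nq a b + Nq c d := by
  by_cases hab : a = 0 ∧ b = 0
  · obtain ⟨h1, h2⟩ := hab; subst h1; subst h2
    simp [nq_zero, nq_nonneg]
  by_cases hcd : c = 0 ∧ d = 0
  · obtain ⟨h1, h2⟩ := hcd; subst h1; subst h2
    simp [nq_zero, nq_nonneg]
  have hp := abs_sum_pos hab
  have hq := abs_sum_pos hcd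
  have hpq : 0 < |a| + |b| + (|c| + |d|) := by linarith
  have hrpq : |a + c| + |b + d| ≤ |a| + |b| + (|c| + |d|) := by
    have := abs_add_le a c; have := abs_add_le b d; linarith
  have hrc : |a + c| ≤ |a + c| + |b + d| := by have := abs_nonneg (b + d); linarith
  by_cases hr0 : |a + c| + |b + d| = 0
  · have h1 : a + c = 0 := abs_eq_zero.mp (by nlinarith [abs_nonneg (a+c), abs_nonneg (b+d)])
    have h2 : b + d = 0 := abs_eq_zero.mp (by nlinarith [abs_nonneg (a+c), abs_nonneg (b+d)])
    rw [h1, h2, nq_zero]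
    have := nq_nonneg a b; have := nq_nonneg c d; linarith
  have hrpos : 0 < |a + c| + |b + d| :=
    lt_of_le_of_ne (by positivity) (Ne.symm hr0)
  set r : ℚ := |a + c| + |b + d| with hrdef
  set p : ℚ := |a| + |b| with hpdef
  set q : ℚ := |c| + |d| with hqdef
  have key0 : (a + c) ^ 2 ≤ r * (p + q) := by
    nlinarith [sq_abs (a + c), abs_nonneg (a + c)]
  have key1 : r + (a + c) ^ 2 / r ≤ (p + q) + (a + c) ^ 2 / (p + q) := by
    have hid : (p + q) + (a + c) ^ 2 / (p + q) - (r + (a + c) ^ 2 / r)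
        = ((p + q) - r) * (r * (p + q) - (a + c) ^ 2) / (r * (p + q)) := by
      field_simp
      ring
    have hnn : 0 ≤ ((p + q) - r) * (r * (p + q) - (a + c) ^ 2) / (r * (p + q)) := by
      apply div_nonneg
      · exact mul_nonneg (by linarith) (by linarith)
      · positivity
    linarith [hid, hnn]
  have key2 : (a + c) ^ 2 / (p + q) ≤ a ^ 2 / p + c ^ 2 / q := by
    rw [div_add_div _ _ (ne_of_gt hp) (ne_of_gt hq), div_le_div_iff₀ hpq (mul_pos hp hq)]
    nlinarith [sq_nonneg (a * q - c * p)]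
  show r + (a + c) ^ 2 / r ≤ (p + a ^ 2 / p) + (q + c ^ 2 / q)
  linarith

lemma abs_eq_abs_of_nonneg_mul {x y : ℚ} (habs : |x| = |y|) (hxy : 0 ≤ x * y) : x = y := by
  rcases le_or_gt 0 x with hx | hx <;> rcases le_or_gt 0 y with hy | hy
  · rw [abs_of_nonneg hx, abs_of_nonneg hy] at habs; exact habs
  · have : x = 0 := by nlinarith
    rw [this] at habs ⊢; rw [abs_of_neg hy] at habs; simp at habs; linarith
  · have : y = 0 := by nlinarith
    rw [this] at habs ⊢; rw [abs_of_neg hx] at habs; simp at habs; linarith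
  · rw [abs_of_neg hx, abs_of_neg hy] at habs; linarith

lemma mul_abs_comm_of_nonneg {x y : ℚ} (hxy : 0 ≤ x * y) : x * |y| = y * |x| := by
  rcases le_or_gt 0 x with hx | hx <;> rcases le_or_gt 0 y with hy | hy
  · rw [abs_of_nonneg hx, abs_of_nonneg hy]; ring
  · have : x = 0 := by nlinarith
    simp [this]
  · have : y = 0 := by nlinarith
    simp [this]
  · rw [abs_of_neg hx, abs_of_neg hy]; ring

lemma colinear_of {a b c d : ℚ} (hab : ¬(a = 0 ∧ b = 0))
    (haqcp : a * (|c| + |d|) = c * (|a| + |b|)) (hac : 0 ≤ a * c) (hbd : 0 ≤ b * d) :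
    ∃ e : ℚ, 0 ≤ e ∧ c = e * a ∧ d = e * b := by
  have hp := abs_sum_pos hab
  by_cases ha0 : a = 0
  · have hc0 : c = 0 := by
      have h' : c * (|a| + |b|) = 0 := by rw [← haqcp, ha0]; ring
      rcases mul_eq_zero.mp h' with h'' | h''
      · exact h''
      · exact absurd h'' (ne_of_gt hp)
    have hb0 : b ≠ 0 := fun hb => hab ⟨ha0, hb⟩
    refine ⟨d / b, ?_, by rw [hc0, ha0]; ring, ?_⟩
    · rcases le_or_gt 0 b with hb | hb
      · have hbpos : 0 < b := lt_of_le_of_ne hb (Ne.symm hb0)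
        have : 0 ≤ d := by nlinarith
        positivity
      · have : d ≤ 0 := by nlinarith
        have h2 : 0 ≤ d / b := by
          rw [div_nonneg_iff]; right; exact ⟨this, le_of_lt hb⟩
        exact h2
    · field_simp
  · have habs : a * |d| = c * |b| := by
      have := mul_abs_comm_of_nonneg hac
      nlinarith [haqcp, this]
    have habs2 : |a| * |d| = |c| * |b| := by
      have := congrArg abs habs
      rwa [abs_mul, abs_mul, abs_abs, abs_abs] at this
    have hadcb : a * d = c * b := by
      apply abs_eq_abs_of_nonneg_mul
      · rw [abs_mul, abs_mul]; linarith [habs2]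
      · nlinarith [hac, hbd]
    refine ⟨c / a, ?_, by field_simp, ?_⟩
    · rcases le_or_gt 0 a with ha | ha
      · have hapos : 0 < a := lt_of_le_of_ne ha (Ne.symm ha0)
        have : 0 ≤ c := by nlinarith
        positivity
      · have : c ≤ 0 := by nlinarith
        rw [div_nonneg_iff]; right; exact ⟨this, le_of_lt ha⟩
    · field_simp
      linarith [hadcb]

lemma nq_subadd_eq {a b c d : ℚ} (h : Nq (a + c) (b + d) = Nq a b + Nq c d) :
    (a = 0 ∧ b = 0) ∨ ∃ e : ℚ, 0 ≤ e ∧ c = e * a ∧ d = e * b := by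
  by_cases hab : a = 0 ∧ b = 0
  · exact Or.inl hab
  by_cases hcd : c = 0 ∧ d = 0
  · exact Or.inr ⟨0, le_refl 0, by rw [hcd.1]; ring, by rw [hcd.2]; ring⟩
  have hp := abs_sum_pos hab
  have hq := abs_sum_pos hcd
  have hpq : 0 < |a| + |b| + (|c| + |d|) := by linarith
  have hrpq : |a + c| + |b + d| ≤ |a| + |b| + (|c| + |d|) := by
    have := abs_add_le a c; have := abs_add_le b d; linarith
  have hrc : |a + c| ≤ |a + c| + |b + d| := by have := abs_nonneg (b + d); linarith
  by_cases hr0 : |a + c| + |b + d| = 0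
  · exfalso
    have h1 : a + c = 0 := abs_eq_zero.mp (by nlinarith [abs_nonneg (a+c), abs_nonneg (b+d)])
    have h2 : b + d = 0 := abs_eq_zero.mp (by nlinarith [abs_nonneg (a+c), abs_nonneg (b+d)])
    have hL : Nq (a + c) (b + d) = 0 := by rw [h1, h2, nq_zero]
    have := nq_pos hab; have := nq_nonneg c d
    have hcontra : Nq a b + Nq c d = 0 := by rw [← h, hL]
    linarith
  have hrpos : 0 < |a + c| + |b + d| :=
    lt_of_le_of_ne (by positivity) (Ne.symm hr0)
  set r : ℚ := |a + c| + |b + d| with hrdef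
  set p : ℚ := |a| + |b| with hpdef
  set q : ℚ := |c| + |d| with hqdef
  have key0 : (a + c) ^ 2 ≤ r * r := by
    nlinarith [sq_abs (a + c), abs_nonneg (a + c)]
  -- the two inequality steps
  have hid : (p + q) + (a + c) ^ 2 / (p + q) - (r + (a + c) ^ 2 / r)
      = ((p + q) - r) * (r * (p + q) - (a + c) ^ 2) / (r * (p + q)) := by
    field_simp
    ring
  have key1 : r + (a + c) ^ 2 / r ≤ (p + q) + (a + c) ^ 2 / (p + q) := by
    have hnn : 0 ≤ ((p + q) - r) * (r * (p + q) - (a + c) ^ 2) / (r * (p + q)) := by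
      apply div_nonneg
      · exact mul_nonneg (by linarith) (by nlinarith)
      · positivity
    linarith [hid, hnn]
  have key2 : (a + c) ^ 2 / (p + q) ≤ a ^ 2 / p + c ^ 2 / q := by
    rw [div_add_div _ _ (ne_of_gt hp) (ne_of_gt hq), div_le_div_iff₀ hpq (mul_pos hp hq)]
    nlinarith [sq_nonneg (a * q - c * p)]
  have hLR : r + (a + c) ^ 2 / r = (p + a ^ 2 / p) + (q + c ^ 2 / q) := h
  -- equality in key2
  have e2 : (a + c) ^ 2 / (p + q) = a ^ 2 / p + c ^ 2 / q := by linarith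
  have haqcp : a * q = c * p := by
    rw [div_add_div _ _ (ne_of_gt hp) (ne_of_gt hq), div_eq_div_iff hpq.ne' (mul_pos hp hq).ne']
      at e2
    have hsq : (a * q - c * p) ^ 2 = 0 := by linear_combination -e2
    have hz : a * q - c * p = 0 := sq_eq_zero_iff.mp hsq
    linarith
  -- equality in key1
  have e1 : r + (a + c) ^ 2 / r = (p + q) + (a + c) ^ 2 / (p + q) := by linarith
  have hfac : ((p + q) - r) * (r * (p + q) - (a + c) ^ 2) = 0 := by
    have h0 : ((p + q) - r) * (r * (p + q) - (a + c) ^ 2) / (r * (p + q)) = 0 := by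
      rw [← hid]; linarith
    have hden : r * (p + q) ≠ 0 := by positivity
    exact (div_eq_zero_iff.mp h0).resolve_right hden
  have hreq : r = p + q := by
    rcases mul_eq_zero.mp hfac with h' | h'
    · linarith
    · have h5 : r * (p + q) ≤ r * r := by linarith [key0, h']
      have h6 : p + q ≤ r := (mul_le_mul_iff_right₀ hrpos).mp h5
      linarith
  clear h hid key0 key1 key2 e1 e2 hfac hLR hpq hrc hr0
  -- coordinatewise triangle equalities
  have h1 : |a + c| = |a| + |c| := by
    have := abs_add_le a c; have := abs_add_le b d
    have : |b + d| = |b| + |d| := by linarith [abs_add_le b d, abs_add_le a c]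
    linarith [abs_add_le a c]
  have h2 : |b + d| = |b| + |d| := by linarith [abs_add_le a c]
  have hac : 0 ≤ a * c := by
    clear haqcp hreq h2 hrpq hrdef hpdef hqdef
    have h1' : |a + c| ^ 2 = (|a| + |c|) ^ 2 := by rw [h1]
    nlinarith [sq_abs (a + c), sq_abs a, sq_abs c, abs_mul a c, abs_nonneg (a * c), h1']
  have hbd : 0 ≤ b * d := by
    clear haqcp hreq h1 hac hrpq hrdef hpdef hqdef
    have h2' : |b + d| ^ 2 = (|b| + |d|) ^ 2 := by rw [h2]
    nlinarith [sq_abs (b + d), sq_abs b, sq_abs d, abs_mul b d, abs_nonneg (b * d), h2']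
  refine Or.inr (colinear_of hab ?_ hac hbd)
  rw [hpdef, hqdef] at haqcp
  linarith [haqcp]


section ConeBasics
variable {V : Type*} [AddCommGroup V] [Module ℚ V]

lemma zero_mem_coneGen {n : ℕ} (g : Fin n → V) : (0 : V) ∈ coneGen g :=
  ⟨0, fun _ => le_refl 0, by simp⟩

lemma add_mem_coneGen {n : ℕ} {g : Fin n → V} {x y : V} (hx : x ∈ coneGen g)
    (hy : y ∈ coneGen g) : x + y ∈ coneGen g := by
  obtain ⟨c, hc, rfl⟩ := hx; obtain ⟨c', hc', rfl⟩ := hy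
  exact ⟨c + c', fun i => add_nonneg (hc i) (hc' i), by
    rw [← Finset.sum_add_distrib]; simp [add_smul]⟩

lemma smul_mem_coneGen {n : ℕ} {g : Fin n → V} {x : V} {t : ℚ} (ht : 0 ≤ t)
    (hx : x ∈ coneGen g) : t • x ∈ coneGen g := by
  obtain ⟨c, hc, rfl⟩ := hx
  exact ⟨fun i => t * c i, fun i => mul_nonneg ht (hc i), by
    rw [Finset.smul_sum]; simp [smul_smul]⟩

lemma mem_coneGen_self {n : ℕ} (g : Fin n → V) (i : Fin n) : g i ∈ coneGen g := by
  refine ⟨fun j => if j = i then 1 else 0, fun j => by positivity, ?_⟩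
  simp [ite_smul]

lemma sum_mem_coneGen {ι : Type*} (s : Finset ι) (f : ι → V) {n : ℕ} {g : Fin n → V}
    (h : ∀ i ∈ s, f i ∈ coneGen g) : ∑ i ∈ s, f i ∈ coneGen g :=
  Finset.sum_induction f (· ∈ coneGen g) (fun _ _ ha hb => add_mem_coneGen ha hb)
    (zero_mem_coneGen g) h

lemma coneGen_subset {n m : ℕ} {g : Fin n → V} {g' : Fin m → V}
    (h : ∀ i, g i ∈ coneGen g') : coneGen g ⊆ coneGen g' := by
  rintro x ⟨c, hc, rfl⟩
  exact sum_mem_coneGen _ _ (fun i _ => smul_mem_coneGen (hc i) (h i))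

lemma coneGen_eq_of {n m : ℕ} (g : Fin n → V) (g' : Fin m → V)
    (h : ∀ i, g i ∈ coneGen g') (h' : ∀ j, g' j ∈ coneGen g) : coneGen g = coneGen g' :=
  subset_antisymm (coneGen_subset h) (coneGen_subset h')

def cone2 (u v : V) : Set V := coneGen ![u, v]

lemma mem_cone2 {u v x : V} :
    x ∈ cone2 u v ↔ ∃ a b : ℚ, 0 ≤ a ∧ 0 ≤ b ∧ x = a • u + b • v := by
  constructor
  · rintro ⟨c, hc, rfl⟩
    exact ⟨c 0, c 1, hc 0, hc 1, by simp [Fin.sum_univ_two]⟩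
  · rintro ⟨a, b, ha, hb, rfl⟩
    refine ⟨![a, b], fun i => by fin_cases i <;> simpa, by simp [Fin.sum_univ_two]⟩

lemma mem_cone2_of {u v x : V} {a b : ℚ} (ha : 0 ≤ a) (hb : 0 ≤ b)
    (hx : x = a • u + b • v) : x ∈ cone2 u v := mem_cone2.mpr ⟨a, b, ha, hb, hx⟩

lemma zero_mem_cone2 (u v : V) : (0 : V) ∈ cone2 u v := zero_mem_coneGen _

lemma left_mem_cone2 (u v : V) : u ∈ cone2 u v := by
  simpa [cone2] using mem_coneGen_self ![u, v] 0

lemma right_mem_cone2 (u v : V) : v ∈ cone2 u v := by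
  simpa [cone2] using mem_coneGen_self ![u, v] 1

lemma mem_ray {s x : V} : x ∈ cone2 s s ↔ ∃ c : ℚ, 0 ≤ c ∧ x = c • s := by
  rw [mem_cone2]
  constructor
  · rintro ⟨a, b, ha, hb, rfl⟩
    exact ⟨a + b, by linarith, by rw [add_smul]⟩
  · rintro ⟨c, hc, rfl⟩
    exact ⟨c, 0, hc, le_refl 0, by simp⟩

lemma sc_elim {C : Set V} (h : C ∩ (-C) = {0}) {x : V} (hx : x ∈ C) (hnx : -x ∈ C) :
    x = 0 := by
  have hmem : x ∈ C ∩ (-C) := ⟨hx, by simpa [Set.mem_neg] using hnx⟩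
  rw [h] at hmem; simpa using hmem

lemma sc_mono {C D : Set V} (h : C ⊆ D) (h0 : (0 : V) ∈ C) (hD : D ∩ (-D) = {0}) :
    C ∩ (-C) = {0} := by
  apply subset_antisymm
  · intro x hx
    rw [← hD]
    exact ⟨h hx.1, Set.neg_subset_neg.mpr h hx.2⟩
  · intro x hx
    simp only [Set.mem_singleton_iff] at hx
    subst hx
    exact ⟨h0, by simpa [Set.mem_neg] using h0⟩

end ConeBasics

section Coord
variable {V : Type*} [AddCommGroup V] [Module ℚ V] (e : V ≃ₗ[ℚ] (Fin 2 → ℚ))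

def Nv (x : V) : ℚ := Nq (e x 0) (e x 1)

def dt (u v : V) : ℚ := e u 0 * e v 1 - e u 1 * e v 0

lemma coords_eq_zero {x : V} (h0 : e x 0 = 0) (h1 : e x 1 = 0) : x = 0 := by
  apply e.injective
  rw [map_zero]
  funext i
  fin_cases i <;> simpa

lemma Nv_zero : Nv e 0 = 0 := by simp [Nv, nq_zero]

lemma Nv_nonneg (x : V) : 0 ≤ Nv e x := nq_nonneg _ _

lemma Nv_pos {x : V} (hx : x ≠ 0) : 0 < Nv e x := by
  apply nq_pos
  rintro ⟨h0, h1⟩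
  exact hx (coords_eq_zero e h0 h1)

lemma Nv_smul {t : ℚ} (ht : 0 ≤ t) (x : V) : Nv e (t • x) = t * Nv e x := by
  unfold Nv
  rw [map_smul]
  simp only [Pi.smul_apply, smul_eq_mul]
  exact nq_smul ht _ _

lemma Nv_add_le (x y : V) : Nv e (x + y) ≤ Nv e x + Nv e y := by
  unfold Nv
  rw [map_add]
  simp only [Pi.add_apply]
  exact nq_subadd _ _ _ _

lemma Nv_add_eq {x y : V} (h : Nv e (x + y) = Nv e x + Nv e y) :
    x = 0 ∨ ∃ c : ℚ, 0 ≤ c ∧ y = c • x := by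
  unfold Nv at h
  rw [map_add] at h
  simp only [Pi.add_apply] at h
  rcases nq_subadd_eq h with ⟨h0, h1⟩ | ⟨c, hc, h1, h2⟩
  · exact Or.inl (coords_eq_zero e h0 h1)
  · refine Or.inr ⟨c, hc, ?_⟩
    apply e.injective
    rw [map_smul]
    funext i
    fin_cases i
    · simpa using h1
    · simpa using h2

def linV (a b : ℚ) : V →ₗ[ℚ] ℚ :=
  a • ((LinearMap.proj 0 : (Fin 2 → ℚ) →ₗ[ℚ] ℚ).comp e.toLinearMap) +
  b • ((LinearMap.proj 1 : (Fin 2 → ℚ) →ₗ[ℚ] ℚ).comp e.toLinearMap)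

lemma linV_apply (a b : ℚ) (x : V) : linV e a b x = a * e x 0 + b * e x 1 := by
  simp [linV, LinearMap.proj_apply, smul_eq_mul]

def interp (u v : V) : V →ₗ[ℚ] ℚ :=
  linV e ((Nv e u * e v 1 - Nv e v * e u 1) / dt e u v)
    ((Nv e v * e u 0 - Nv e u * e v 0) / dt e u v)

lemma interp_apply (u v x : V) :
    interp e u v x = (Nv e u * dt e x v + Nv e v * dt e u x) / dt e u v := by
  rw [interp, linV_apply, div_mul_eq_mul_div, div_mul_eq_mul_div, ← add_div]
  congr 1
  unfold dt
  ring

lemma dt_self (u : V) : dt e u u = 0 := by unfold dt; ring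

lemma dt_zero_left (v : V) : dt e 0 v = 0 := by simp [dt]

lemma dt_zero_right (u : V) : dt e u 0 = 0 := by simp [dt]

lemma interp_left {u v : V} (hd : dt e u v ≠ 0) : interp e u v u = Nv e u := by
  rw [interp_apply, dt_self, mul_zero, add_zero, mul_div_assoc, div_self hd, mul_one]

lemma interp_right {u v : V} (hd : dt e u v ≠ 0) : interp e u v v = Nv e v := by
  rw [interp_apply, dt_self, mul_zero, zero_add, mul_div_assoc, div_self hd, mul_one]

lemma dt_comb_left (u v : V) (a b : ℚ) : dt e (a • u + b • v) v = a * dt e u v := by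
  unfold dt
  rw [map_add, map_smul, map_smul]
  simp only [Pi.add_apply, Pi.smul_apply, smul_eq_mul]
  ring

lemma dt_comb_right (u v : V) (a b : ℚ) : dt e u (a • u + b • v) = b * dt e u v := by
  unfold dt
  rw [map_add, map_smul, map_smul]
  simp only [Pi.add_apply, Pi.smul_apply, smul_eq_mul]
  ring

lemma decomp {u v : V} (hd : dt e u v ≠ 0) (x : V) :
    x = (dt e x v / dt e u v) • u + (dt e u x / dt e u v) • v := by
  apply e.injective
  rw [map_add, map_smul, map_smul]
  funext i
  fin_cases i <;>
  · simp only [Pi.add_apply, Pi.smul_apply, smul_eq_mul, Fin.zero_eta, Fin.mk_one]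
    field_simp
    unfold dt
    ring

lemma coeff_of_mem {u v x : V} (hd : dt e u v ≠ 0) (hx : x ∈ cone2 u v) :
    0 ≤ dt e x v / dt e u v ∧ 0 ≤ dt e u x / dt e u v := by
  obtain ⟨a, b, ha, hb, rfl⟩ := mem_cone2.mp hx
  rw [dt_comb_left, dt_comb_right, mul_div_assoc, mul_div_assoc, div_self hd,
    mul_one, mul_one]
  exact ⟨ha, hb⟩

lemma mem_of_coeff {u v x : V} (hd : dt e u v ≠ 0) (h1 : 0 ≤ dt e x v / dt e u v)
    (h2 : 0 ≤ dt e u x / dt e u v) : x ∈ cone2 u v :=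
  mem_cone2_of h1 h2 (decomp e hd x)

lemma dep {s r : V} (hs : s ≠ 0) (hd : dt e s r = 0) : ∃ t : ℚ, r = t • s := by
  have hcoords : ¬(e s 0 = 0 ∧ e s 1 = 0) := fun ⟨h0, h1⟩ => hs (coords_eq_zero e h0 h1)
  unfold dt at hd
  by_cases h0 : e s 0 = 0
  · have h1 : e s 1 ≠ 0 := fun h => hcoords ⟨h0, h⟩
    refine ⟨e r 1 / e s 1, ?_⟩
    apply e.injective
    rw [map_smul]
    funext i
    fin_cases i <;> simp only [Pi.smul_apply, smul_eq_mul]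
    · show e r 0 = e r 1 / e s 1 * e s 0
      rw [h0] at hd ⊢
      rw [mul_zero]
      have h2 : e s 1 * e r 0 = 0 := by linear_combination -hd
      rcases mul_eq_zero.mp h2 with h | h
      · exact absurd h h1
      · exact h
    · show e r 1 = e r 1 / e s 1 * e s 1
      field_simp
  · refine ⟨e r 0 / e s 0, ?_⟩
    apply e.injective
    rw [map_smul]
    funext i
    fin_cases i <;> simp only [Pi.smul_apply, smul_eq_mul]
    · show e r 0 = e r 0 / e s 0 * e s 0
      field_simp
    · show e r 1 = e r 0 / e s 0 * e s 1
      field_simp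
      linear_combination hd

lemma pair_reduce {u v : V} (hsc : cone2 u v ∩ (-(cone2 u v)) = {0})
    (hd : dt e u v = 0) : ∃ r : V, cone2 u v = cone2 r r := by
  by_cases hu : u = 0
  · refine ⟨v, ?_⟩
    subst hu
    ext x
    rw [mem_cone2, mem_ray]
    constructor
    · rintro ⟨a, b, _, hb, rfl⟩
      exact ⟨b, hb, by simp⟩
    · rintro ⟨c, hc, rfl⟩
      exact ⟨0, c, le_refl 0, hc, by simp⟩
  · obtain ⟨t, rfl⟩ := dep e hu hd
    rcases le_or_gt 0 t with ht | ht
    · refine ⟨u, ?_⟩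
      ext x
      rw [mem_cone2, mem_ray]
      constructor
      · rintro ⟨a, b, ha, hb, rfl⟩
        refine ⟨a + b * t, by positivity, ?_⟩
        rw [add_smul, smul_smul]
      · rintro ⟨c, hc, rfl⟩
        exact ⟨c, 0, hc, le_refl 0, by simp⟩
    · exfalso
      apply hu
      apply sc_elim hsc (left_mem_cone2 u (t • u))
      have hcoeff : (0:ℚ) ≤ -t⁻¹ := by
        have := inv_lt_zero.mpr ht
        linarith
      have : (-t⁻¹) • (t • u) = -u := by
        rw [smul_smul, show -t⁻¹ * t = -1 by
          rw [neg_mul, inv_mul_cancel₀ (ne_of_lt ht)]]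
        simp
      rw [← this]
      exact mem_cone2_of (le_refl 0) hcoeff (by simp)

def cone3 (w u v : V) : Set V := coneGen ![w, u, v]

lemma mem_cone3 {w u v x : V} :
    x ∈ cone3 w u v ↔ ∃ a b c : ℚ, 0 ≤ a ∧ 0 ≤ b ∧ 0 ≤ c ∧ x = a • w + b • u + c • v := by
  constructor
  · rintro ⟨c, hc, rfl⟩
    exact ⟨c 0, c 1, c 2, hc 0, hc 1, hc 2, by simp [Fin.sum_univ_three]⟩
  · rintro ⟨a, b, c, ha, hb, hc, rfl⟩
    exact ⟨![a, b, c], fun i => by fin_cases i <;> simpa, by simp [Fin.sum_univ_three]⟩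

lemma cone2_subset_cone3 (w u v : V) : cone2 u v ⊆ cone3 w u v := by
  apply coneGen_subset
  intro i
  fin_cases i
  · simpa using mem_coneGen_self ![w, u, v] 1
  · simpa using mem_coneGen_self ![w, u, v] 2

include e in
lemma tri_reduce {w u v : V} (hsc : cone3 w u v ∩ (-(cone3 w u v)) = {0}) :
    ∃ r s : V, cone3 w u v = cone2 r s := by
  by_cases hd : dt e u v = 0
  · -- reduce the pair u v to a ray
    have hsc2 : cone2 u v ∩ (-(cone2 u v)) = {0} :=
      sc_mono (cone2_subset_cone3 w u v) (zero_mem_coneGen _) hsc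
    obtain ⟨r, hr⟩ := pair_reduce e hsc2 hd
    refine ⟨w, r, coneGen_eq_of _ _ ?_ ?_⟩
    · intro i
      fin_cases i
      · simpa [cone2] using left_mem_cone2 w r
      · have : u ∈ cone2 r r := by rw [← hr]; exact left_mem_cone2 u v
        obtain ⟨c, hc, rfl⟩ := mem_ray.mp this
        exact mem_cone2_of (le_refl 0) hc (by simp)
      · have : v ∈ cone2 r r := by rw [← hr]; exact right_mem_cone2 u v
        obtain ⟨c, hc, rfl⟩ := mem_ray.mp this
        exact mem_cone2_of (le_refl 0) hc (by simp)
    · intro j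
      fin_cases j
      · simpa using mem_coneGen_self ![w, u, v] 0
      · have : r ∈ cone2 u v := by rw [hr]; exact mem_ray.mpr ⟨1, by norm_num, by simp⟩
        exact cone2_subset_cone3 w u v this
  · have hu : u ≠ 0 := fun h => hd (by rw [h]; exact dt_zero_left e v)
    have hv : v ≠ 0 := fun h => hd (by rw [h]; exact dt_zero_right e u)
    set α := dt e w v / dt e u v with hα
    set β := dt e u w / dt e u v with hβ
    have hw : w = α • u + β • v := decomp e hd w
    rcases le_or_gt 0 α with hα0 | hα0 <;> rcases le_or_gt 0 β with hβ0 | hβ0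
    · -- w ∈ cone2 u v
      refine ⟨u, v, coneGen_eq_of _ _ ?_ ?_⟩
      · intro i
        fin_cases i
        · simpa [cone2] using mem_cone2_of hα0 hβ0 hw
        · simpa [cone2] using left_mem_cone2 u v
        · simpa [cone2] using right_mem_cone2 u v
      · intro j
        fin_cases j
        · simpa using mem_coneGen_self ![w, u, v] 1
        · simpa using mem_coneGen_self ![w, u, v] 2
    · -- α ≥ 0, β < 0 : u ∈ cone2 w v if α > 0
      rcases eq_or_lt_of_le hα0 with hz | hpos
      · -- α = 0 : w = β • v with β < 0, contradiction
        exfalso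
        have hwv : w = β • v := by rw [hw, ← hz]; simp
        have hmw : -w ∈ cone3 w u v := by
          have : -w = (0:ℚ) • u + (-β) • v := by rw [hwv]; simp
          exact cone2_subset_cone3 w u v (mem_cone2_of (le_refl 0) (by linarith) this)
        have hw0 : w = 0 := sc_elim hsc (by simpa [cone3] using mem_coneGen_self ![w, u, v] 0) hmw
        apply hv
        rw [hw0] at hwv
        have : β ≠ 0 := ne_of_lt hβ0
        exact (smul_eq_zero.mp hwv.symm).resolve_left this
      · -- α > 0 : u = α⁻¹ • w + (-β/α) • v
        have hu' : u = α⁻¹ • w + (-β / α) • v := by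
          have : α • u = w - β • v := by rw [hw]; abel
          calc u = α⁻¹ • (α • u) := by rw [smul_smul, inv_mul_cancel₀ (ne_of_gt hpos), one_smul]
          _ = α⁻¹ • (w - β • v) := by rw [this]
          _ = α⁻¹ • w + (-β / α) • v := by
              rw [smul_sub, sub_eq_add_neg, smul_smul]
              congr 1
              rw [← neg_smul]
              congr 1
              field_simp
        refine ⟨w, v, coneGen_eq_of _ _ ?_ ?_⟩
        · intro i
          fin_cases i
          · simpa [cone2] using left_mem_cone2 w v
          · simpa [cone2] using mem_cone2_of (le_of_lt (inv_pos.mpr hpos))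
              (div_nonneg (by linarith) (le_of_lt hpos)) hu'
          · simpa [cone2] using right_mem_cone2 w v
        · intro j
          fin_cases j
          · simpa using mem_coneGen_self ![w, u, v] 0
          · simpa using mem_coneGen_self ![w, u, v] 2
    · -- α < 0, β ≥ 0 : symmetric
      rcases eq_or_lt_of_le hβ0 with hz | hpos
      · exfalso
        have hwu : w = α • u := by rw [hw, ← hz]; simp
        have hmw : -w ∈ cone3 w u v := by
          have : -w = (-α) • u + (0:ℚ) • v := by rw [hwu]; simp
          exact cone2_subset_cone3 w u v (mem_cone2_of (by linarith) (le_refl 0) this)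
        have hw0 : w = 0 := sc_elim hsc (by simpa [cone3] using mem_coneGen_self ![w, u, v] 0) hmw
        apply hu
        rw [hw0] at hwu
        have : α ≠ 0 := ne_of_lt hα0
        exact (smul_eq_zero.mp hwu.symm).resolve_left this
      · have hv' : v = (-α / β) • u + β⁻¹ • w := by
          have : β • v = w - α • u := by rw [hw]; abel
          calc v = β⁻¹ • (β • v) := by rw [smul_smul, inv_mul_cancel₀ (ne_of_gt hpos), one_smul]
          _ = β⁻¹ • (w - α • u) := by rw [this]
          _ = (-α / β) • u + β⁻¹ • w := by
              rw [smul_sub, sub_eq_add_neg, smul_smul, add_comm]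
              congr 1
              rw [← neg_smul]
              congr 1
              field_simp
        refine ⟨w, u, coneGen_eq_of _ _ ?_ ?_⟩
        · intro i
          fin_cases i
          · simpa [cone2] using left_mem_cone2 w u
          · simpa [cone2] using right_mem_cone2 w u
          · have hvm : v ∈ cone2 w u := mem_cone2_of (le_of_lt (inv_pos.mpr hpos))
              (div_nonneg (by linarith : (0:ℚ) ≤ -α) (le_of_lt hpos) : (0:ℚ) ≤ -α / β)
              (by rw [hv']; exact add_comm ((-α / β) • u) (β⁻¹ • w))
            simpa [cone2] using hvm
        · intro j
          fin_cases j
          · simpa using mem_coneGen_self ![w, u, v] 0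
          · simpa using mem_coneGen_self ![w, u, v] 1
    · -- both negative : contradiction
      exfalso
      have hmw : -w ∈ cone3 w u v := by
        have : -w = (-α) • u + (-β) • v := by simp only [hw, neg_add, neg_smul]
        exact cone2_subset_cone3 w u v (mem_cone2_of (by linarith) (by linarith) this)
      have hw0 : w = 0 := sc_elim hsc (by simpa [cone3] using mem_coneGen_self ![w, u, v] 0) hmw
      have : dt e w v = 0 := by rw [hw0]; exact dt_zero_left e v
      rw [hα] at hα0
      rw [this] at hα0
      simp at hα0

include e in
lemma cone_structure : ∀ {n : ℕ} (g : Fin n → V),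
    (coneGen g ∩ (-(coneGen g)) = {0}) → ∃ u v : V, coneGen g = cone2 u v := by
  intro n
  induction n with
  | zero =>
    intro g _
    refine ⟨0, 0, ?_⟩
    ext x
    constructor
    · rintro ⟨c, _, rfl⟩
      simpa using zero_mem_cone2 (0:V) 0
    · rintro hx
      obtain ⟨a, b, _, _, rfl⟩ := mem_cone2.mp hx
      exact ⟨![], fun i => i.elim0, by simp⟩
  | succ n ih =>
    intro g hsc
    have hsub : coneGen (g ∘ Fin.succ) ⊆ coneGen g :=
      coneGen_subset (fun i => mem_coneGen_self g i.succ)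
    have hsc0 := sc_mono hsub (zero_mem_coneGen _) hsc
    obtain ⟨u, v, huv⟩ := ih (g ∘ Fin.succ) hsc0
    have h3 : coneGen g = cone3 (g 0) u v := by
      apply coneGen_eq_of
      · intro i
        induction i using Fin.cases with
        | zero => simpa using mem_coneGen_self ![g 0, u, v] 0
        | succ j =>
          apply cone2_subset_cone3
          rw [← huv]
          exact mem_coneGen_self (g ∘ Fin.succ) j
      · intro j
        fin_cases j
        · simpa using mem_coneGen_self g 0
        · apply hsub
          rw [huv]
          simpa using left_mem_cone2 u v
        · apply hsub
          rw [huv]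
          simpa using right_mem_cone2 u v
    rw [h3] at hsc ⊢
    exact tri_reduce e hsc



include e in
lemma interp_lt {u v x : V} (hd : dt e u v ≠ 0) (hx : x ∉ cone2 u v) :
    interp e u v x < Nv e x := by
  have hu : u ≠ 0 := fun h => hd (by rw [h]; exact dt_zero_left e v)
  have hv : v ≠ 0 := fun h => hd (by rw [h]; exact dt_zero_right e u)
  set α := dt e x v / dt e u v with hαdef
  set β := dt e u x / dt e u v with hβdef
  have hdc : x = α • u + β • v := decomp e hd x
  have hfx : interp e u v x = α * Nv e u + β * Nv e v := by
    conv_lhs => rw [hdc]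
    rw [map_add, map_smul, map_smul, interp_left e hd, interp_right e hd]
    simp [smul_eq_mul]
  have hnotin : ¬(0 ≤ α ∧ 0 ≤ β) := fun ⟨h1, h2⟩ => hx (mem_cone2_of h1 h2 hdc)
  rcases le_or_gt 0 α with hα | hα <;> rcases le_or_gt 0 β with hβ | hβ
  · exact absurd ⟨hα, hβ⟩ hnotin
  · -- 0 ≤ α, β < 0
    have key : α • u = x + (-β) • v := by rw [hdc, neg_smul]; abel
    have h1 : Nv e (α • u) ≤ Nv e x + Nv e ((-β) • v) := by
      rw [key]; exact Nv_add_le e x ((-β) • v)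
    rw [Nv_smul e hα, Nv_smul e (by linarith : (0:ℚ) ≤ -β)] at h1
    rw [hfx]
    by_contra hcon
    push_neg at hcon
    have heq : Nv e (x + (-β) • v) = Nv e x + Nv e ((-β) • v) := by
      rw [← key, Nv_smul e hα, Nv_smul e (by linarith : (0:ℚ) ≤ -β)]
      linarith
    rcases Nv_add_eq e heq with h0 | ⟨c, hc, hcv⟩
    · exact hx (h0 ▸ zero_mem_cone2 u v)
    · rcases eq_or_lt_of_le hc with hc0 | hcpos
      · have : (-β) • v = 0 := by rw [hcv, ← hc0, zero_smul]
        rcases smul_eq_zero.mp this with h' | h'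
        · linarith [neg_eq_zero.mp h']
        · exact hv h'
      · apply hx
        have hxv : x = (c⁻¹ * -β) • v := by
          have := congrArg (fun y => c⁻¹ • y) hcv
          simp only [smul_smul] at this
          rw [inv_mul_cancel₀ (ne_of_gt hcpos), one_smul] at this
          rw [← this]
        exact mem_cone2_of (a := 0) (b := c⁻¹ * -β) (le_refl 0)
          (mul_nonneg (inv_nonneg.mpr hc) (by linarith)) (by rw [hxv, zero_smul, zero_add])
  · -- α < 0, 0 ≤ β
    have key : β • v = x + (-α) • u := by rw [hdc, neg_smul]; abel
    have h1 : Nv e (β • v) ≤ Nv e x + Nv e ((-α) • u) := by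
      rw [key]; exact Nv_add_le e x ((-α) • u)
    rw [Nv_smul e hβ, Nv_smul e (by linarith : (0:ℚ) ≤ -α)] at h1
    rw [hfx]
    by_contra hcon
    push_neg at hcon
    have heq : Nv e (x + (-α) • u) = Nv e x + Nv e ((-α) • u) := by
      rw [← key, Nv_smul e hβ, Nv_smul e (by linarith : (0:ℚ) ≤ -α)]
      linarith
    rcases Nv_add_eq e heq with h0 | ⟨c, hc, hcv⟩
    · exact hx (h0 ▸ zero_mem_cone2 u v)
    · rcases eq_or_lt_of_le hc with hc0 | hcpos
      · have : (-α) • u = 0 := by rw [hcv, ← hc0, zero_smul]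
        rcases smul_eq_zero.mp this with h' | h'
        · linarith [neg_eq_zero.mp h']
        · exact hu h'
      · apply hx
        have hxu : x = (c⁻¹ * -α) • u := by
          have := congrArg (fun y => c⁻¹ • y) hcv
          simp only [smul_smul] at this
          rw [inv_mul_cancel₀ (ne_of_gt hcpos), one_smul] at this
          rw [← this]
        exact mem_cone2_of (a := c⁻¹ * -α) (b := 0)
          (mul_nonneg (inv_nonneg.mpr hc) (by linarith)) (le_refl 0) (by rw [hxu, zero_smul, add_zero])
  · -- both negative
    rw [hfx]
    nlinarith [mul_neg_of_neg_of_pos hα (Nv_pos e hu),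
      mul_neg_of_neg_of_pos hβ (Nv_pos e hv), Nv_nonneg e x]

include e in
lemma separation {τ : Set V} (hτc : IsCone τ) (hτs : τ ∩ (-τ) = {0}) {r : V} (hr : r ∉ τ) :
    ∃ L : V →ₗ[ℚ] ℚ, (∀ y ∈ τ, 0 ≤ L y) ∧ L r < 0 := by
  obtain ⟨n, g, rfl⟩ := hτc
  obtain ⟨p, q, hpq⟩ := cone_structure e g hτs
  rw [hpq] at hr ⊢
  rw [hpq] at hτs
  clear hpq
  by_cases hd : dt e p q = 0
  · obtain ⟨s, hs⟩ := pair_reduce e hτs hd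
    rw [hs] at hr ⊢
    by_cases hs0 : s = 0
    · subst hs0
      have hrne : r ≠ 0 := by
        intro h
        exact hr (h ▸ zero_mem_cone2 (0:V) 0)
      have hcoords : ¬(e r 0 = 0 ∧ e r 1 = 0) := fun ⟨h0, h1⟩ => hrne (coords_eq_zero e h0 h1)
      refine ⟨linV e (-(e r 0)) (-(e r 1)), ?_, ?_⟩
      · intro y hy
        obtain ⟨c, hc, rfl⟩ := mem_ray.mp hy
        rw [linV_apply, map_smul]
        simp
      · rw [linV_apply]
        rcases not_and_or.mp hcoords with h | h
        · nlinarith [mul_self_pos.mpr h, mul_self_nonneg (e r 1)]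
        · nlinarith [mul_self_pos.mpr h, mul_self_nonneg (e r 0)]
    · by_cases hds : dt e s r = 0
      · obtain ⟨t, rfl⟩ := dep e hs0 hds
        have ht : t < 0 := by
          by_contra h
          push_neg at h
          exact hr (mem_ray.mpr ⟨t, h, rfl⟩)
        have hcoords : ¬(e s 0 = 0 ∧ e s 1 = 0) := fun ⟨h0, h1⟩ => hs0 (coords_eq_zero e h0 h1)
        have hss : 0 < e s 0 * e s 0 + e s 1 * e s 1 := by
          rcases not_and_or.mp hcoords with h | h
          · nlinarith [mul_self_pos.mpr h, mul_self_nonneg (e s 1)]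
          · nlinarith [mul_self_pos.mpr h, mul_self_nonneg (e s 0)]
        refine ⟨linV e (e s 0) (e s 1), ?_, ?_⟩
        · intro y hy
          obtain ⟨c, hc, rfl⟩ := mem_ray.mp hy
          rw [linV_apply, map_smul]
          simp only [Pi.smul_apply, smul_eq_mul]
          nlinarith
        · rw [linV_apply, map_smul]
          simp only [Pi.smul_apply, smul_eq_mul]
          nlinarith
      · refine ⟨linV e ((e s 1) / dt e s r) (-(e s 0) / dt e s r), ?_, ?_⟩
        · intro y hy
          obtain ⟨c, hc, rfl⟩ := mem_ray.mp hy
          rw [linV_apply, map_smul]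
          simp only [Pi.smul_apply, smul_eq_mul]
          have : e s 1 / dt e s r * (c * e s 0) + -(e s 0) / dt e s r * (c * e s 1) = 0 := by
            field_simp
            ring
          rw [this]
        · rw [linV_apply]
          have : e s 1 / dt e s r * e r 0 + -(e s 0) / dt e s r * e r 1 = -1 := by
            field_simp
            unfold dt
            ring
          rw [this]
          norm_num
  · -- p q independent
    set α := dt e r q / dt e p q with hαdef
    set β := dt e p r / dt e p q with hβdef
    have hdc : r = α • p + β • q := decomp e hd r
    have hnotin : ¬(0 ≤ α ∧ 0 ≤ β) := fun ⟨h1, h2⟩ => hr (mem_cone2_of h1 h2 hdc)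
    rcases le_or_gt 0 α with hα | hα
    · -- then β < 0
      have hβneg : β < 0 := by
        by_contra h
        push_neg at h
        exact hnotin ⟨hα, h⟩
      refine ⟨linV e (-(e p 1) / dt e p q) ((e p 0) / dt e p q), ?_, ?_⟩
      · intro y hy
        obtain ⟨a, b, ha, hb, rfl⟩ := mem_cone2.mp hy
        have happ : linV e (-(e p 1) / dt e p q) ((e p 0) / dt e p q) (a • p + b • q)
            = dt e p (a • p + b • q) / dt e p q := by
          rw [linV_apply, map_add, map_smul, map_smul]
          simp only [Pi.add_apply, Pi.smul_apply, smul_eq_mul]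
          unfold dt
          simp only [map_add, map_smul, Pi.add_apply, Pi.smul_apply, smul_eq_mul]
          field_simp
          ring
        rw [happ, dt_comb_right, mul_div_assoc, div_self hd, mul_one]
        exact hb
      · have happ : linV e (-(e p 1) / dt e p q) ((e p 0) / dt e p q) r
            = dt e p r / dt e p q := by
          rw [linV_apply]
          unfold dt
          field_simp
          ring
        rw [happ]
        exact hβneg
    · refine ⟨linV e ((e q 1) / dt e p q) (-(e q 0) / dt e p q), ?_, ?_⟩
      · intro y hy
        obtain ⟨a, b, ha, hb, rfl⟩ := mem_cone2.mp hy
        have happ : linV e ((e q 1) / dt e p q) (-(e q 0) / dt e p q) (a • p + b • q)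
            = dt e (a • p + b • q) q / dt e p q := by
          rw [linV_apply, map_add, map_smul, map_smul]
          simp only [Pi.add_apply, Pi.smul_apply, smul_eq_mul]
          unfold dt
          simp only [map_add, map_smul, Pi.add_apply, Pi.smul_apply, smul_eq_mul]
          field_simp
          ring
        rw [happ, dt_comb_left, mul_div_assoc, div_self hd, mul_one]
        exact ha
      · have happ : linV e ((e q 1) / dt e p q) (-(e q 0) / dt e p q) r
            = dt e r q / dt e p q := by
          rw [linV_apply]
          unfold dt
          field_simp
          ring
        rw [happ]
        exact hα

lemma exists_uniform_eps {α : Type*} [DecidableEq α] (F : Finset α) (P : α → ℚ → Prop)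
    (h : ∀ τ ∈ F, ∃ ε, 0 < ε ∧ P τ ε)
    (hmono : ∀ τ ε ε', 0 < ε' → ε' ≤ ε → P τ ε → P τ ε') :
    ∃ ε, 0 < ε ∧ ∀ τ ∈ F, P τ ε := by
  classical
  induction F using Finset.induction_on with
  | empty => exact ⟨1, one_pos, by simp⟩
  | @insert a F' ha ih =>
    obtain ⟨ε1, hε1, h1⟩ := h a (Finset.mem_insert_self _ _)
    obtain ⟨ε2, hε2, h2⟩ := ih (fun τ hτ => h τ (Finset.mem_insert_of_mem hτ))
    refine ⟨min ε1 ε2, lt_min hε1 hε2, ?_⟩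
    intro τ hτ
    rcases Finset.mem_insert.mp hτ with rfl | hτ'
    · exact hmono τ ε1 _ (lt_min hε1 hε2) (min_le_left _ _) h1
    · exact hmono τ ε2 _ (lt_min hε1 hε2) (min_le_right _ _) (h2 τ hτ')

end Coord
end QP
end

section Main
open QP

variable {V : Type*} [AddCommGroup V] [Module ℚ V]

lemma QP.main_qp (e : V ≃ₗ[ℚ] (Fin 2 → ℚ)) (S : Set (Set V)) (hS : IsFan S) :
    IsQuasiProjectiveFan S := by
  classical
  obtain ⟨hfin, hcone, hface, hint⟩ := hS
  have hzero_mem : ∀ D ∈ S, (0 : V) ∈ D := by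
    intro D hD
    obtain ⟨m, h, rfl⟩ := (hcone D hD).1
    exact zero_mem_coneGen h
  have hsmul_mem : ∀ D ∈ S, ∀ y ∈ D, ∀ c : ℚ, 0 ≤ c → c • y ∈ D := by
    intro D hD y hy c hc
    obtain ⟨m, h, rfl⟩ := (hcone D hD).1
    exact smul_mem_coneGen hc hy
  have key : ∀ C : Set V, IsMaximalIn S C → ∃ f : V →ₗ[ℚ] ℚ,
      (∀ x ∈ C, Nv e x ≤ f x) ∧
      (∀ C', IsMaximalIn S C' → C' ≠ C → ∀ x ∈ C, x ∈ C' → f x = Nv e x) ∧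
      (∀ τ, IsMaximalIn S τ → τ ≠ C → ∀ x ∈ τ, x ∉ C → f x < Nv e x) := by
    intro C hCm
    obtain ⟨hCS, hCmax⟩ := hCm
    have hCsc : C ∩ (-C) = {0} := (hcone C hCS).2
    obtain ⟨u, v, hC2⟩ : ∃ u v : V, C = cone2 u v := by
      obtain ⟨n, g, hCg⟩ := (hcone C hCS).1
      obtain ⟨u, v, huv⟩ := cone_structure e g (by rw [← hCg]; exact hCsc)
      exact ⟨u, v, hCg.trans huv⟩
    by_cases hd : dt e u v = 0
    · -- degenerate pair : C is a ray or {0}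
      obtain ⟨r, hray⟩ := pair_reduce e (by rw [← hC2]; exact hCsc) hd
      have hC2r : C = cone2 r r := hC2.trans hray
      by_cases hr0 : r = 0
      · -- C = {0}
        have hCzero : ∀ x ∈ C, x = (0 : V) := by
          intro x hx
          rw [hC2r, hr0] at hx
          obtain ⟨c, _, rfl⟩ := mem_ray.mp hx
          simp
        have hCsub : ∀ D ∈ S, C ⊆ D := by
          intro D hD y hy
          rw [hCzero y hy]
          exact hzero_mem D hD
        refine ⟨0, ?_, ?_, ?_⟩
        · intro x hx
          rw [hCzero x hx]
          simp [Nv_zero]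
        · intro C' hC' hne x hx _
          exact absurd (hCmax C' hC'.1 (hCsub C' hC'.1)) hne
        · intro τ hτ hne x _ _
          exact absurd (hCmax τ hτ.1 (hCsub τ hτ.1)) hne
      · -- C is the ray generated by r
        have hrne : ∀ τ, IsMaximalIn S τ → τ ≠ C → r ∉ τ := by
          intro τ hτ hne hrin
          apply hne
          apply hCmax τ hτ.1
          intro y hy
          rw [hC2r] at hy
          obtain ⟨c, hc, rfl⟩ := mem_ray.mp hy
          exact hsmul_mem τ hτ.1 r hrin c hc
        set vv := e.symm ![-(e r 1), e r 0] with hvvdef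
        have hevv0 : e vv 0 = -(e r 1) := by
          rw [hvvdef, LinearEquiv.apply_symm_apply]
          simp
        have hevv1 : e vv 1 = e r 0 := by
          rw [hvvdef, LinearEquiv.apply_symm_apply]
          simp
        have hcoords : ¬(e r 0 = 0 ∧ e r 1 = 0) := fun ⟨h0, h1⟩ => hr0 (coords_eq_zero e h0 h1)
        have hrr : 0 < e r 0 * e r 0 + e r 1 * e r 1 := by
          rcases not_and_or.mp hcoords with h | h
          · nlinarith [mul_self_pos.mpr h, mul_self_nonneg (e r 1)]
          · nlinarith [mul_self_pos.mpr h, mul_self_nonneg (e r 0)]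
        have hdtv : dt e r vv = e r 0 * e r 0 + e r 1 * e r 1 := by
          unfold dt
          rw [hevv0, hevv1]
          ring
        -- per-cone epsilon
        have heps : ∀ τ, IsMaximalIn S τ → τ ≠ C →
            ∃ ε : ℚ, 0 < ε ∧ ∀ δ : ℚ, 0 ≤ δ → δ ≤ ε → ∀ c : ℚ, 0 < c → c • (r + δ • vv) ∉ τ := by
          intro τ hτ hne
          obtain ⟨L, hL1, hL2⟩ := separation e (hcone τ hτ.1).1 (hcone τ hτ.1).2 (hrne τ hτ hne)
          refine ⟨if L vv ≤ 0 then 1 else (-(L r)) / (2 * L vv), ?_, ?_⟩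
          · split_ifs with hif
            · exact one_pos
            · push_neg at hif
              apply div_pos (by linarith) (by linarith)
          · intro δ hδ0 hδε c hc hmem
            have hLx : 0 ≤ L (c • (r + δ • vv)) := hL1 _ hmem
            rw [map_smul, map_add, map_smul] at hLx
            simp only [smul_eq_mul] at hLx
            have hneg : L r + δ * L vv < 0 := by
              split_ifs at hδε with hif
              · have : δ * L vv ≤ 0 := mul_nonpos_of_nonneg_of_nonpos hδ0 hif
                linarith
              · push_neg at hif
                have hle : δ * L vv ≤ (-(L r)) / (2 * L vv) * L vv :=
                  mul_le_mul_of_nonneg_right hδε (le_of_lt hif)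
                have heqv : (-(L r)) / (2 * L vv) * L vv = -(L r) / 2 := by
                  field_simp
                rw [heqv] at hle
                linarith
            nlinarith [mul_pos hc (neg_pos.mpr hneg)]
        -- uniform epsilon
        have hTfin : {τ : Set V | IsMaximalIn S τ ∧ τ ≠ C}.Finite :=
          hfin.subset (fun τ hτ => hτ.1.1)
        obtain ⟨ε, hεpos, hεall⟩ := exists_uniform_eps hTfin.toFinset
            (fun τ ε => ∀ δ, 0 ≤ δ → δ ≤ ε → ∀ c : ℚ, 0 < c → c • (r + δ • vv) ∉ τ)
            (by
              intro τ hτ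
              rw [Set.Finite.mem_toFinset] at hτ
              exact heps τ hτ.1 hτ.2)
            (by
              intro τ ε ε' hε' hle hP δ hδ0 hδε
              exact hP δ hδ0 (le_trans hδε hle))
        set w := r + ε • vv with hwdef
        have hw1 : w = (1:ℚ) • r + ε • vv := by rw [hwdef, one_smul]
        have hdrw : dt e r w ≠ 0 := by
          rw [hw1, dt_comb_right, hdtv]
          positivity
        have hsector : ∀ x, x ∈ cone2 r w → x ≠ 0 → ∀ τ, IsMaximalIn S τ → τ ≠ C → x ∉ τ := by
          intro x hx hx0 τ hτ hne
          obtain ⟨a, b, ha, hb, rfl⟩ := mem_cone2.mp hx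
          have hab : 0 < a + b := by
            rcases eq_or_lt_of_le (add_nonneg ha hb) with h | h
            · exfalso
              have ha0 : a = 0 := by linarith
              have hb0 : b = 0 := by linarith
              exact hx0 (by rw [ha0, hb0, zero_smul, zero_smul, add_zero])
            · exact h
          have hδ0 : 0 ≤ b * ε / (a + b) := by positivity
          have hδε : b * ε / (a + b) ≤ ε := by
            rw [div_le_iff₀ hab]
            nlinarith
          have hxeq : a • r + b • w = (a + b) • (r + (b * ε / (a + b)) • vv) := by
            have hcδ : (a + b) * (b * ε / (a + b)) = b * ε := by
              field_simp
            have h1 : (a + b) • (r + (b * ε / (a + b)) • vv)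
                = (a + b) • r + ((a + b) * (b * ε / (a + b))) • vv := by
              rw [smul_add, smul_smul]
            rw [hwdef, h1, hcδ, add_smul, smul_add, smul_smul]
            abel
          intro hmem
          rw [hxeq] at hmem
          have := hεall τ (by rw [Set.Finite.mem_toFinset]; exact ⟨hτ, hne⟩)
            (b * ε / (a + b)) hδ0 hδε (a + b) hab
          exact this hmem
        have hval : ∀ x ∈ C, interp e r w x = Nv e x := by
          intro x hx
          rw [hC2r] at hx
          obtain ⟨c, hc, rfl⟩ := mem_ray.mp hx
          rw [map_smul]
          simp only [smul_eq_mul]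
          rw [interp_left e hdrw, Nv_smul e hc]
        refine ⟨interp e r w, ?_, ?_, ?_⟩
        · intro x hx
          exact le_of_eq (hval x hx).symm
        · intro C' _ _ x hx _
          exact hval x hx
        · intro τ hτ hne x hxτ hxC
          by_cases hxs : x ∈ cone2 r w
          · exfalso
            have hx0 : x ≠ 0 := fun h0 => hxC (by rw [hC2r, h0]; exact zero_mem_cone2 r r)
            exact hsector x hxs hx0 τ hτ hne hxτ
          · exact interp_lt e hdrw hxs
    · -- nondegenerate 2-dimensional cone
      refine ⟨interp e u v, ?_, ?_, ?_⟩
      · intro x hx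
        rw [hC2] at hx
        obtain ⟨a, b, ha, hb, rfl⟩ := mem_cone2.mp hx
        have h1 : Nv e (a • u + b • v) ≤ Nv e (a • u) + Nv e (b • v) := Nv_add_le e _ _
        rw [Nv_smul e ha, Nv_smul e hb] at h1
        have h2 : interp e u v (a • u + b • v) = a * Nv e u + b * Nv e v := by
          rw [map_add, map_smul, map_smul, interp_left e hd, interp_right e hd]
          simp [smul_eq_mul]
        linarith [h2 ▸ h1]
      · intro C' hC' hne x hxC hxC'
        obtain ⟨lam, hlampos, hlameq⟩ := (hint C hCS C' hC'.1).1
        have hlamx : lam x = 0 := by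
          have hxint : x ∈ C ∩ C' := ⟨hxC, hxC'⟩
          rw [hlameq] at hxint
          exact hxint.2
        rw [hC2] at hxC
        obtain ⟨a, b, ha, hb, rfl⟩ := mem_cone2.mp hxC
        have hlu : 0 ≤ lam u := hlampos u (by rw [hC2]; exact left_mem_cone2 u v)
        have hlv : 0 ≤ lam v := hlampos v (by rw [hC2]; exact right_mem_cone2 u v)
        have hsum : a * lam u + b * lam v = 0 := by
          rw [map_add, map_smul, map_smul] at hlamx
          simpa [smul_eq_mul] using hlamx
        by_cases hzz : lam u = 0 ∧ lam v = 0
        · exfalso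
          have hCsub : C ⊆ C' := by
            intro y hy
            have hyC := hy
            rw [hC2] at hy
            obtain ⟨a', b', _, _, rfl⟩ := mem_cone2.mp hy
            have hlamy : lam (a' • u + b' • v) = 0 := by
              rw [map_add, map_smul, map_smul, hzz.1, hzz.2]
              simp
            have hin : (a' • u + b' • v) ∈ C ∩ {x | lam x = 0} := ⟨hyC, hlamy⟩
            rw [← hlameq] at hin
            exact hin.2
          exact hne (hCmax C' hC'.1 hCsub)
        · have hcompute : ∀ a' b' : ℚ, interp e u v (a' • u + b' • v) = a' * Nv e u + b' * Nv e v := by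
            intro a' b'
            rw [map_add, map_smul, map_smul, interp_left e hd, interp_right e hd]
            simp [smul_eq_mul]
          rcases not_and_or.mp hzz with hne0 | hne0
          · have hlupos : 0 < lam u := lt_of_le_of_ne hlu (Ne.symm hne0)
            have ha0 : a = 0 := by
              by_contra hcon
              have hapos : 0 < a := lt_of_le_of_ne ha (Ne.symm hcon)
              nlinarith [mul_pos hapos hlupos, mul_nonneg hb hlv]
            rw [ha0, hcompute, zero_mul, zero_add, zero_smul, zero_add, Nv_smul e hb]
          · have hlvpos : 0 < lam v := lt_of_le_of_ne hlv (Ne.symm hne0)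
            have hb0 : b = 0 := by
              by_contra hcon
              have hbpos : 0 < b := lt_of_le_of_ne hb (Ne.symm hcon)
              nlinarith [mul_pos hbpos hlvpos, mul_nonneg ha hlu]
            rw [hb0, hcompute, zero_mul, add_zero, zero_smul, add_zero, Nv_smul e ha]
      · intro τ hτ hne x hxτ hxC
        rw [hC2] at hxC
        exact interp_lt e hd hxC
  -- assemble the family of linear forms
  refine ⟨fun C => if h : IsMaximalIn S C then (key C h).choose else 0, ?_, ?_⟩
  · intro C hC C' hC' x hx
    simp only [dif_pos hC, dif_pos hC']
    by_cases heq : C = C'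
    · subst heq
      rfl
    · have h1 := (key C hC).choose_spec.2.1 C' hC' (Ne.symm heq) x hx.1 hx.2
      have h2 := (key C' hC').choose_spec.2.1 C hC heq x hx.2 hx.1
      rw [h1, h2]
  · intro C hC C' hC' hne x hxC hxC'
    simp only [dif_pos hC, dif_pos hC']
    have hlt := (key C' hC').choose_spec.2.2 C hC hne x hxC hxC'
    have hle := (key C hC).choose_spec.1 x hxC
    linarith

end Main

/-- Every fan in a two-dimensional `ℚ`-vector space is
quasi-projective; in particular, every fan in `ℚ²` is quasi-projective. -/
theorem fan_in_dim_two_quasiProjective :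
    (∀ (V : Type) [AddCommGroup V] [Module ℚ V] [FiniteDimensional ℚ V],
      Module.finrank ℚ V = 2 → ∀ S : Set (Set V), IsFan S → IsQuasiProjectiveFan S) ∧
    (∀ S : Set (Set (Fin 2 → ℚ)), IsFan S → IsQuasiProjectiveFan S) := by
  constructor
  · intro V _ _ _ hdim S hS
    exact QP.main_qp (((Module.finBasis ℚ V).reindex (finCongr hdim)).equivFun) S hS
  · intro S hS
    exact QP.main_qp (LinearEquiv.refl ℚ (Fin 2 → ℚ)) S hS
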